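/- arXiv:math/0605448 — 6 statements merged into one kernel-verified Lean document; each statement's English description precedes it below -/
import Mathlib

section
/- If a set P ⊆ Baire space is the union of a countable family ⟨P^i : i ∈ ℕ⟩ of sets each of which admits a scale, then P admits a scale. -/
/-- Baire space: the functions from `ℕ` to `ℕ`. -/
abbrev Baire := ℕ → ℕ

/-- `φ` is a scale on `P ⊆ Baire`: whenever a sequence of elements of `P` converges
pointwise to `y` and each norm sequence is eventually constant with value `l n`,
then `y ∈ P` and `φ n y ≤ l n` for every `n`. -/
def IsScale (P : Set Baire) (φ : ℕ → Baire → Ordinal) : Prop :=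
  ∀ (x : ℕ → Baire) (y : Baire) (l : ℕ → Ordinal),
    (∀ i, x i ∈ P) →
    (∀ n, ∃ m, ∀ i, m ≤ i → x i n = y n) →
    (∀ n, ∃ m, ∀ i, m ≤ i → φ n (x i) = l n) →
    y ∈ P ∧ ∀ n, φ n y ≤ l n

universe u v

/-- Transfer a scale along an order-equivalence of norms (possibly across universes). -/
lemma IsScale.congr {P : Set Baire} {φ : ℕ → Baire → Ordinal.{u}} (h : IsScale P φ)
    {g : ℕ → Baire → Ordinal.{v}} (hg : ∀ n x y, g n x ≤ g n y ↔ φ n x ≤ φ n y) :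
    IsScale P g := by
  intro x y l hx hc hn
  choose m hm using hn
  have heq : ∀ n x' y', g n x' = g n y' ↔ φ n x' = φ n y' := by
    intro n x' y'
    constructor
    · intro he
      exact le_antisymm ((hg n x' y').mp he.le) ((hg n y' x').mp he.ge)
    · intro he
      exact le_antisymm ((hg n x' y').mpr he.le) ((hg n y' x').mpr he.ge)
  have main := h x y (fun n => φ n (x (m n))) hx hc (fun n =>
    ⟨m n, fun i hi => (heq n (x i) (x (m n))).mp ((hm n i hi).trans (hm n (m n) le_rfl).symm)⟩)
  refine ⟨main.1, fun n => ?_⟩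
  calc g n y ≤ g n (x (m n)) := (hg n y (x (m n))).mpr (main.2 n)
    _ = l n := hm n (m n) le_rfl

/-- Collapse an ordinal-valued norm into `Ordinal.{0}` preserving order. -/
lemma exists_collapse (f : Baire → Ordinal.{u}) :
    ∃ g : Baire → Ordinal.{0}, ∀ x y, g x ≤ g y ↔ f x ≤ f y := by
  let Q := Quot (fun a b : Baire => f a = f b)
  let F : Q → Ordinal.{u} := Quot.lift f (fun _ _ h => h)
  have Finj : Function.Injective F := by
    intro a b
    induction a using Quot.ind with | _ a =>
    induction b using Quot.ind with | _ b =>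
    exact fun h => Quot.sound h
  let e : Q ↪ Ordinal.{u} := ⟨F, Finj⟩
  haveI : IsWellOrder Q (e ⁻¹'o (· < ·)) := (RelEmbedding.preimage e (· < ·)).isWellOrder
  refine ⟨fun x => Ordinal.typein (e ⁻¹'o (· < ·)) (Quot.mk _ x), fun x y => ?_⟩
  rw [Ordinal.typein_le_typein]
  exact not_lt

lemma scale_lt_aux {κ α β : Ordinal.{0}} {i j : ℕ} (hα : α < κ) (hij : i < j) :
    κ * i + α < κ * j + β := by
  have h2 : κ * (i : Ordinal) + κ = κ * ((i : Ordinal) + 1) := by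
    rw [mul_add, mul_one]
  have h3 : κ * ((i : Ordinal) + 1) ≤ κ * (j : Ordinal) := by
    apply mul_le_mul_right
    have : ((i + 1 : ℕ) : Ordinal.{0}) ≤ (j : Ordinal) := Nat.cast_le.mpr hij
    simpa using this
  calc κ * (i : Ordinal) + α < κ * (i : Ordinal) + κ := add_lt_add_right hα _
    _ = κ * ((i : Ordinal) + 1) := h2
    _ ≤ κ * (j : Ordinal) := h3
    _ ≤ κ * (j : Ordinal) + β := le_self_add

lemma scale_key {κ α β : Ordinal.{0}} {i j : ℕ} (hα : α < κ) (hβ : β < κ)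
    (heq : κ * i + α = κ * j + β) : i = j ∧ α = β := by
  have hij : i = j := by
    rcases lt_trichotomy i j with hlt | he | hgt
    · exact absurd heq (ne_of_lt (scale_lt_aux hα hlt))
    · exact he
    · exact absurd heq.symm (ne_of_lt (scale_lt_aux hβ hgt))
  subst hij
  exact ⟨rfl, add_left_cancel_iff.mp heq⟩

/-- The main construction, in a single universe. -/
lemma union_admits_scale0 (P : ℕ → Set Baire)
    (h : ∀ i, ∃ φ : ℕ → Baire → Ordinal.{0}, IsScale (P i) φ) :
    ∃ ψ : ℕ → Baire → Ordinal.{0}, IsScale (⋃ i, P i) ψ := by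
  classical
  choose Φ hΦ using h
  set κ := Ordinal.lsub (fun p : ℕ × ℕ × Baire => Φ p.1 p.2.1 p.2.2) with hκ
  have hlt : ∀ i n x, Φ i n x < κ := fun i n x => Ordinal.lt_lsub _ (i, n, x)
  let ix : Baire → ℕ := fun z => if hz : ∃ i, z ∈ P i then Nat.find hz else 0
  have hixm : ∀ z, (∃ i, z ∈ P i) → z ∈ P (ix z) := by
    intro z hz
    show z ∈ P (if hz' : ∃ i, z ∈ P i then Nat.find hz' else 0)
    rw [dif_pos hz]
    exact Nat.find_spec hz
  have hixle : ∀ z i, z ∈ P i → ix z ≤ i := by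
    intro z i hzi
    show (if hz' : ∃ i, z ∈ P i then Nat.find hz' else 0) ≤ i
    rw [dif_pos ⟨i, hzi⟩]
    exact Nat.find_min' _ hzi
  refine ⟨fun n z => κ * (ix z : Ordinal) + Φ (ix z) n z, ?_⟩
  intro x y l hx hconv hnorm
  have e : ∀ j, ∃ i, x j ∈ P i := fun j => Set.mem_iUnion.mp (hx j)
  obtain ⟨m, hm⟩ := hnorm 0
  set i₀ := ix (x m) with hi₀
  have hIconst : ∀ j, m ≤ j → ix (x j) = i₀ := by
    intro j hj
    have h1 : κ * (ix (x j) : Ordinal) + Φ (ix (x j)) 0 (x j) = l 0 := hm j hj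
    have h2 : κ * (i₀ : Ordinal) + Φ i₀ 0 (x m) = l 0 := hm m le_rfl
    exact (scale_key (hlt _ _ _) (hlt _ _ _) (h1.trans h2.symm)).1
  have hmem : ∀ j, m ≤ j → x j ∈ P i₀ := by
    intro j hj
    have := hixm (x j) (e j)
    rwa [hIconst j hj] at this
  have hα : ∀ n, ∃ a, (κ * (i₀ : Ordinal) + a = l n) ∧
      ∃ M, ∀ j, M ≤ j → Φ i₀ n (x (m + j)) = a := by
    intro n
    obtain ⟨M, hM⟩ := hnorm n
    have key : ∀ j, M ≤ m + j →
        κ * (i₀ : Ordinal) + Φ i₀ n (x (m + j)) = l n := by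
      intro j hj
      have h1 : κ * (ix (x (m + j)) : Ordinal) + Φ (ix (x (m + j))) n (x (m + j)) = l n :=
        hM (m + j) hj
      rwa [hIconst (m + j) (Nat.le_add_right _ _)] at h1
    refine ⟨Φ i₀ n (x (m + M)), key M (Nat.le_add_left _ _), M, ?_⟩
    intro j hj
    have h1 := key j (le_trans hj (Nat.le_add_left _ _))
    have h2 := key M (Nat.le_add_left _ _)
    exact add_left_cancel_iff.mp (h1.trans h2.symm)
  choose α hαl hαc using hα
  have main := hΦ i₀ (fun j => x (m + j)) y α
    (fun j => hmem (m + j) (Nat.le_add_right _ _))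
    (fun n => by
      obtain ⟨M, hM⟩ := hconv n
      exact ⟨M, fun j hj => hM (m + j) (le_trans hj (Nat.le_add_left _ _))⟩)
    hαc
  obtain ⟨hyP, hyle⟩ := main
  have hyU : y ∈ ⋃ i, P i := Set.mem_iUnion.mpr ⟨i₀, hyP⟩
  refine ⟨hyU, fun n => ?_⟩
  show κ * (ix y : Ordinal) + Φ (ix y) n y ≤ l n
  rcases lt_or_eq_of_le (hixle y i₀ hyP) with hlt' | heq'
  · have := scale_lt_aux (β := α n) (hlt (ix y) n y) hlt'
    exact le_of_lt (lt_of_lt_of_eq this (hαl n))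
  · rw [heq']
    calc κ * (i₀ : Ordinal) + Φ i₀ n y ≤ κ * (i₀ : Ordinal) + α n :=
        add_le_add_right (hyle n) _
      _ = l n := hαl n

/-- A countable union of sets admitting scales admits a scale. -/
theorem union_admits_scale (P : ℕ → Set Baire)
    (h : ∀ i, ∃ φ : ℕ → Baire → Ordinal, IsScale (P i) φ) :
    ∃ ψ : ℕ → Baire → Ordinal, IsScale (⋃ i, P i) ψ := by
  classical
  have h0 : ∀ i, ∃ φ : ℕ → Baire → Ordinal.{0}, IsScale (P i) φ := by
    intro i
    obtain ⟨φ, hφ⟩ := h i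
    choose g hg using fun n => exists_collapse (φ n)
    exact ⟨g, hφ.congr hg⟩
  obtain ⟨ψ₀, hψ₀⟩ := union_admits_scale0 P h0
  refine ⟨fun n x => Ordinal.lift.{_, 0} (ψ₀ n x), hψ₀.congr ?_⟩
  intro n x y
  exact Ordinal.lift_le
end

section
/- Let Q ⊆ Baire space × Baire space, let ⟨φ̂_i : i ∈ ℕ⟩ be a scale on Q, let κ be an ordinal with φ̂_i(x,w) < κ for all i ∈ ℕ and all (x,w) ∈ Q, and let P = {x : there exists w with (x,w) ∈ Q}. For each i ∈ ℕ fix an order-embedding c_i of the (i+1)-tuples of pairs from κ × ℕ, ordered lexicographically (comparing in turn the first ordinal entry, the first natural-number entry, the second ordinal entry, the second natural-number entry, and so on), into the ordinals. Define norms on P by φ_0(x) = 0 and φ_{i+1}(x) = the minimum, over all w with (x,w) ∈ Q, of c_i(⟨(φ̂_0(x,w), w(0)), (φ̂_1(x,w), w(1)), …, (φ̂_i(x,w), w(i))⟩). Then ⟨φ_i : i ∈ ℕ⟩ is a scale on P. (This is the 'inf' step, Case 1 of the paper's Moschovakis scale construction, propagating scales through the existential real quantifier.) -/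
/-- `φ` is a scale on `Q ⊆ Baire × Baire`, where convergence of pairs is
coordinatewise pointwise convergence. -/
def IsScale₂ (Q : Set (Baire × Baire)) (φ : ℕ → Baire × Baire → Ordinal) : Prop :=
  ∀ (p : ℕ → Baire × Baire) (q : Baire × Baire) (l : ℕ → Ordinal),
    (∀ i, p i ∈ Q) →
    (∀ n, ∃ m, ∀ i, m ≤ i → (p i).1 n = q.1 n) →
    (∀ n, ∃ m, ∀ i, m ≤ i → (p i).2 n = q.2 n) →
    (∀ n, ∃ m, ∀ i, m ≤ i → φ n (p i) = l n) →
    q ∈ Q ∧ ∀ n, φ n q ≤ l n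

/-- The lexicographic strict order on `n`-tuples of pairs `(ordinal, natural number)`:
compare in turn the first ordinal entry, the first natural-number entry, the second
ordinal entry, and so on. -/
def TupLex {n : ℕ} (f g : Fin n → Ordinal × ℕ) : Prop :=
  ∃ j, (∀ i, i < j → f i = g i) ∧
    ((f j).1 < (g j).1 ∨ ((f j).1 = (g j).1 ∧ (f j).2 < (g j).2))


private lemma tupLex_trichotomy {n : ℕ} (f g : Fin n → Ordinal × ℕ) :
    f = g ∨ TupLex f g ∨ TupLex g f := by
  by_cases h : f = g
  · exact Or.inl h
  obtain ⟨j, hj, hmin⟩ := wellFounded_lt.has_min {j | f j ≠ g j} (Function.ne_iff.mp h)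
  have hpre : ∀ i, i < j → f i = g i := by
    intro i hi
    by_contra hne
    exact hmin i hne hi
  rcases lt_trichotomy (f j).1 (g j).1 with h1 | h1 | h1
  · exact Or.inr (Or.inl ⟨j, hpre, Or.inl h1⟩)
  · rcases lt_trichotomy (f j).2 (g j).2 with h2 | h2 | h2
    · exact Or.inr (Or.inl ⟨j, hpre, Or.inr ⟨h1, h2⟩⟩)
    · exact absurd (Prod.ext h1 h2) hj
    · exact Or.inr (Or.inr ⟨j, fun i hi => (hpre i hi).symm, Or.inr ⟨h1.symm, h2⟩⟩)
  · exact Or.inr (Or.inr ⟨j, fun i hi => (hpre i hi).symm, Or.inl h1⟩)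

private lemma tupLex_extend {m n : ℕ} (hmn : m ≤ n) (f g : Fin (n + 1) → Ordinal × ℕ)
    (h : TupLex (fun j : Fin (m + 1) => f ⟨(j : ℕ), by omega⟩)
      (fun j : Fin (m + 1) => g ⟨(j : ℕ), by omega⟩)) :
    TupLex f g := by
  obtain ⟨j, hpre, hj⟩ := h
  refine ⟨⟨(j : ℕ), by omega⟩, ?_, hj⟩
  intro i hi
  have hiv : (i : ℕ) < (j : ℕ) := by simpa [Fin.lt_def] using hi
  have h2 : (⟨(i : ℕ), by omega⟩ : Fin (m + 1)) < j := by simpa [Fin.lt_def] using hiv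
  have h3 := hpre ⟨(i : ℕ), by omega⟩ h2
  exact h3

/-- The "inf" step (Case 1) of the Moschovakis scale construction: given a scale `φhat`
on `Q ⊆ Baire × Baire` bounded by `κ`, order-embeddings `c i` of the lexicographically
ordered `(i+1)`-tuples of pairs from `κ × ℕ` into the ordinals, and norms on the
projection `P` defined by `φ 0 x = 0` and
`φ (i+1) x = min_{w, (x,w) ∈ Q} c i ⟨(φhat 0 (x,w), w 0), …, (φhat i (x,w), w i)⟩`,
the sequence `φ` is a scale on `P`. -/
theorem moschovakis_inf_step
    (Q : Set (Baire × Baire)) (φhat : ℕ → Baire × Baire → Ordinal) (κ : Ordinal)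
    (hQ : IsScale₂ Q φhat)
    (hbound : ∀ i p, p ∈ Q → φhat i p < κ)
    (P : Set Baire) (hP : ∀ x, x ∈ P ↔ ∃ w, (x, w) ∈ Q)
    (c : ∀ i : ℕ, (Fin (i + 1) → Ordinal × ℕ) → Ordinal)
    (hc : ∀ (i : ℕ) (f g : Fin (i + 1) → Ordinal × ℕ),
      (∀ j, (f j).1 < κ) → (∀ j, (g j).1 < κ) →
      (TupLex f g ↔ c i f < c i g))
    (φ : ℕ → Baire → Ordinal)
    (hφ0 : ∀ x ∈ P, φ 0 x = 0)
    (hφs : ∀ i, ∀ x ∈ P, φ (i + 1) x =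
      sInf {o : Ordinal | ∃ w, (x, w) ∈ Q ∧
        o = c i fun j : Fin (i + 1) => (φhat (j : ℕ) (x, w), w (j : ℕ))}) :
    IsScale P φ := by
  classical
  intro x y l hxP hconv hnorm
  have hSne : ∀ (i n : ℕ), {o : Ordinal | ∃ w, (x i, w) ∈ Q ∧
      o = c n fun j : Fin (n + 1) => (φhat (j : ℕ) (x i, w), w (j : ℕ))}.Nonempty := by
    intro i n
    obtain ⟨w, hw⟩ := (hP (x i)).1 (hxP i)
    exact ⟨_, w, hw, rfl⟩
  have hmem : ∀ i : ℕ, ∃ w, (x i, w) ∈ Q ∧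
      sInf {o : Ordinal | ∃ w, (x i, w) ∈ Q ∧
        o = c i fun j : Fin (i + 1) => (φhat (j : ℕ) (x i, w), w (j : ℕ))} =
      c i fun j : Fin (i + 1) => (φhat (j : ℕ) (x i, w), w (j : ℕ)) :=
    fun i => csInf_mem (hSne i i)
  choose W hWQ hWeq using hmem
  set T : ℕ → (n : ℕ) → Fin (n + 1) → Ordinal × ℕ :=
    fun i n j => (φhat (j : ℕ) (x i, W i), W i (j : ℕ)) with hT
  have hTb : ∀ i n (j : Fin (n + 1)), (T i n j).1 < κ := fun i n j => hbound _ _ (hWQ i)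
  -- Step A: the witness `W i` achieves the infimum for every norm index `n ≤ i`.
  have stepA : ∀ n i, n ≤ i → c n (T i n) = φ (n + 1) (x i) := by
    intro n i hni
    rw [hφs n (x i) (hxP i)]
    refine le_antisymm (le_csInf (hSne i n) ?_) (csInf_le' ⟨W i, hWQ i, rfl⟩)
    rintro o ⟨w', hw', rfl⟩
    by_contra hlt
    push_neg at hlt
    have hlex : TupLex (fun j : Fin (n + 1) => (φhat (j : ℕ) (x i, w'), w' (j : ℕ))) (T i n) :=
      (hc n _ _ (fun j => hbound _ _ hw') (hTb i n)).2 hlt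
    have hlex' : TupLex (fun j : Fin (i + 1) => (φhat (j : ℕ) (x i, w'), w' (j : ℕ))) (T i i) :=
      tupLex_extend hni _ _ hlex
    have hlt' : c i (fun j : Fin (i + 1) => (φhat (j : ℕ) (x i, w'), w' (j : ℕ))) < c i (T i i) :=
      (hc i _ _ (fun j => hbound _ _ hw') (hTb i i)).1 hlex'
    have hle : sInf {o : Ordinal | ∃ w, (x i, w) ∈ Q ∧
        o = c i fun j : Fin (i + 1) => (φhat (j : ℕ) (x i, w), w (j : ℕ))} ≤
        c i (fun j : Fin (i + 1) => (φhat (j : ℕ) (x i, w'), w' (j : ℕ))) :=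
      csInf_le' ⟨w', hw', rfl⟩
    rw [hWeq i] at hle
    exact absurd (lt_of_le_of_lt hle hlt') (lt_irrefl _)
  choose M hM using hnorm
  set I : ℕ → ℕ := fun n => max (M (n + 1)) n with hI
  -- Step B: the lex tuples stabilize.
  have hTconst : ∀ n i, I n ≤ i → T i n = T (I n) n := by
    intro n i hi
    have h1 : c n (T i n) = l (n + 1) := by
      rw [stepA n i (le_trans (le_max_right _ _) hi)]
      exact hM (n + 1) i (le_trans (le_max_left _ _) hi)
    have h2 : c n (T (I n) n) = l (n + 1) := by
      rw [stepA n (I n) (le_max_right _ _)]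
      exact hM (n + 1) (I n) (le_max_left _ _)
    rcases tupLex_trichotomy (T i n) (T (I n) n) with h | h | h
    · exact h
    · have := (hc n _ _ (hTb i n) (hTb (I n) n)).1 h
      rw [h1, h2] at this
      exact absurd this (lt_irrefl _)
    · have := (hc n _ _ (hTb (I n) n) (hTb i n)).1 h
      rw [h1, h2] at this
      exact absurd this (lt_irrefl _)
  set w : Baire := fun n => W (I n) n with hwdef
  set lam : ℕ → Ordinal := fun n => φhat n (x (I n), W (I n)) with hlam
  have hstab : ∀ n i, I n ≤ i → W i n = w n ∧ φhat n (x i, W i) = lam n := by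
    intro n i hi
    have h := congrFun (hTconst n i hi) (Fin.last n)
    exact ⟨congrArg Prod.snd h, congrArg Prod.fst h⟩
  have hQres := hQ (fun i => (x i, W i)) (y, w) lam hWQ hconv
    (fun n => ⟨I n, fun i hi => (hstab n i hi).1⟩)
    (fun n => ⟨I n, fun i hi => (hstab n i hi).2⟩)
  obtain ⟨hyQ, hφhat_le⟩ := hQres
  have hyP : y ∈ P := (hP y).2 ⟨w, hyQ⟩
  refine ⟨hyP, ?_⟩
  intro n
  cases n with
  | zero =>
    rw [hφ0 y hyP]
    exact zero_le
  | succ n =>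
    set i0 : ℕ := (Finset.range (n + 1)).sup I with hi0
    have hIle : ∀ j : Fin (n + 1), I (j : ℕ) ≤ i0 :=
      fun j => Finset.le_sup (Finset.mem_range.2 j.isLt)
    have hIn : I n ≤ i0 := hIle (Fin.last n)
    have hg : T i0 n = fun j : Fin (n + 1) => (lam (j : ℕ), w (j : ℕ)) := by
      funext j
      have h := hstab (j : ℕ) i0 (hIle j)
      exact Prod.ext h.2 h.1
    have hcg : c n (T i0 n) = l (n + 1) := by
      rw [stepA n i0 (le_trans (le_max_right _ _) hIn)]
      exact hM (n + 1) i0 (le_trans (le_max_left _ _) hIn)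
    have hgb : ∀ j : Fin (n + 1), ((fun j : Fin (n + 1) => (lam (j : ℕ), w (j : ℕ))) j).1 < κ :=
      fun j => hbound _ _ (hWQ (I (j : ℕ)))
    have hfb : ∀ j : Fin (n + 1),
        ((fun j : Fin (n + 1) => (φhat (j : ℕ) (y, w), w (j : ℕ))) j).1 < κ :=
      fun j => hbound _ _ hyQ
    have hcf_le : c n (fun j : Fin (n + 1) => (φhat (j : ℕ) (y, w), w (j : ℕ))) ≤ l (n + 1) := by
      rw [← hcg, hg]
      rcases tupLex_trichotomy (fun j : Fin (n + 1) => (φhat (j : ℕ) (y, w), w (j : ℕ)))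
        (fun j : Fin (n + 1) => (lam (j : ℕ), w (j : ℕ))) with h | h | h
      · rw [h]
      · exact le_of_lt ((hc n _ _ hfb hgb).1 h)
      · exfalso
        obtain ⟨j, _, hj⟩ := h
        rcases hj with h1 | ⟨h1, h2⟩
        · exact absurd h1 (not_lt.2 (hφhat_le (j : ℕ)))
        · exact absurd h2 (lt_irrefl _)
    rw [hφs n y hyP]
    exact le_trans (csInf_le' ⟨w, hyQ, rfl⟩) hcf_le
end

section
/- If Q ⊆ Baire space × Baire space admits a scale, then its projection P = {x : there exists w with (x,w) ∈ Q} admits a scale. -/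
open Ordinal in
/-- base-Λ pairing -/
noncomputable def opair (Λ a b : Ordinal) : Ordinal := Λ * a + b

theorem opair_lt {Λ a a' b b' : Ordinal} (ha : a < a') (hb : b < Λ) :
    opair Λ a b < opair Λ a' b' := by
  unfold opair
  calc Λ * a + b < Λ * a + Λ := by exact add_lt_add_right hb _
    _ = Λ * (a + 1) := by rw [mul_add_one]
    _ ≤ Λ * a' := mul_le_mul_right (Order.add_one_le_of_lt ha) Λ
    _ ≤ Λ * a' + b' := le_self_add

theorem opair_le {Λ a a' b b' : Ordinal} (ha : a ≤ a') (hb : b ≤ b') :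
    opair Λ a b ≤ opair Λ a' b' :=
  add_le_add (mul_le_mul_right ha Λ) hb

theorem opair_inj {Λ a a' b b' : Ordinal} (hb : b < Λ) (hb' : b' < Λ)
    (h : opair Λ a b = opair Λ a' b') : a = a' ∧ b = b' := by
  have haa : a = a' := by
    rcases lt_trichotomy a a' with hlt | he | hgt
    · exact absurd h (ne_of_lt (opair_lt hlt hb))
    · exact he
    · exact absurd h.symm (ne_of_lt (opair_lt hgt hb'))
  subst haa
  exact ⟨rfl, by have := h; unfold opair at this; exact add_left_cancel_iff.mp this⟩

/-- code of the tuple ⟨φ₀(q), q.2 0, …, φₙ(q), q.2 n⟩ in base Λ -/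
noncomputable def ocode (φ : ℕ → Baire × Baire → Ordinal) (Λ : Ordinal) :
    ℕ → Baire × Baire → Ordinal
  | 0, q => opair Λ (φ 0 q) (q.2 0)
  | (n+1), q => opair Λ (opair Λ (ocode φ Λ n q) (φ (n+1) q)) (q.2 (n+1))

section
variable {φ : ℕ → Baire × Baire → Ordinal} {Λ : Ordinal}
  (hφ : ∀ n q, φ n q < Λ) (hω : Ordinal.omega0 ≤ Λ)

theorem nat_lt_Lam (hω : Ordinal.omega0 ≤ Λ) (k : ℕ) : (k : Ordinal) < Λ :=
  lt_of_lt_of_le (Ordinal.nat_lt_omega0 k) hω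

include hφ hω in
theorem ocode_strict {q q' : Baire × Baire} :
    ∀ {m n : ℕ}, m ≤ n → ocode φ Λ m q < ocode φ Λ m q' →
      ocode φ Λ n q < ocode φ Λ n q' := by
  intro m n
  induction n with
  | zero =>
    intro hmn h
    obtain rfl : m = 0 := Nat.le_zero.mp hmn
    exact h
  | succ n ih =>
    intro hmn h
    rcases Nat.lt_or_ge m (n+1) with hm | hm
    · have h1 : ocode φ Λ n q < ocode φ Λ n q' := ih (Nat.lt_succ_iff.mp hm) h
      exact opair_lt (opair_lt h1 (hφ (n+1) q)) (nat_lt_Lam hω _)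
    · obtain rfl : m = n + 1 := le_antisymm hmn hm
      exact h

include hφ hω in
theorem ocode_inj {q q' : Baire × Baire} {n : ℕ}
    (h : ocode φ Λ n q = ocode φ Λ n q') :
    φ n q = φ n q' ∧ q.2 n = q'.2 n := by
  cases n with
  | zero =>
    obtain ⟨h1, h2⟩ := opair_inj (nat_lt_Lam hω _) (nat_lt_Lam hω _) h
    exact ⟨h1, Nat.cast_injective h2⟩
  | succ n =>
    obtain ⟨h1, h2⟩ := opair_inj (nat_lt_Lam hω _) (nat_lt_Lam hω _) h
    obtain ⟨_, h3⟩ := opair_inj (hφ (n+1) q) (hφ (n+1) q') h1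
    exact ⟨h3, Nat.cast_injective h2⟩

theorem ocode_le {q q' : Baire × Baire} {n : ℕ}
    (h : ∀ k ≤ n, φ k q ≤ φ k q' ∧ q.2 k = q'.2 k) :
    ocode φ Λ n q ≤ ocode φ Λ n q' := by
  induction n with
  | zero =>
    exact opair_le (h 0 le_rfl).1 (by rw [(h 0 le_rfl).2])
  | succ n ih =>
    have h1 := ih (fun k hk => h k (hk.trans (Nat.le_succ n)))
    exact opair_le (opair_le h1 (h (n+1) le_rfl).1) (by rw [(h (n+1) le_rfl).2])

end

/-- Collapse an ordinal-valued function on a Type-0 domain into any universe,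
preserving order. -/
theorem collapse_norm {α : Type} (f : α → Ordinal.{u}) :
    ∃ g : α → Ordinal.{v}, ∀ a b, g a ≤ g b ↔ f a ≤ f b := by
  let r : α → α → Prop := fun a b => f a < f b
  haveI : IsWellFounded α r := ⟨InvImage.wf f wellFounded_lt⟩
  have hstrict : ∀ a b, f a < f b → IsWellFounded.rank r a < IsWellFounded.rank r b :=
    fun a b h => IsWellFounded.rank_lt_of_rel h
  have hmono : ∀ a b, f a ≤ f b → IsWellFounded.rank r a ≤ IsWellFounded.rank r b := by
    intro a b hab
    rw [IsWellFounded.rank_eq]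
    apply Ordinal.iSup_le
    rintro ⟨c, hc⟩
    exact Order.succ_le_of_lt (hstrict c b (lt_of_lt_of_le hc hab))
  refine ⟨fun a => Ordinal.lift.{v, 0} (IsWellFounded.rank r a), fun a b => ?_⟩
  rw [Ordinal.lift_le]
  constructor
  · intro h
    by_contra hc
    push_neg at hc
    exact absurd h (not_le.mpr (hstrict b a hc))
  · exact hmono a b

/-- Transfer a scale to norms valued in any other universe. -/
theorem IsScale.collapse {P : Set Baire} {φ : ℕ → Baire → Ordinal.{u}}
    (h : IsScale.{u} P φ) : ∃ ψ : ℕ → Baire → Ordinal.{v}, IsScale.{v} P ψ := by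
  choose g hg using fun n => collapse_norm.{u, v} (φ n)
  have hgeq : ∀ n a b, g n a = g n b ↔ φ n a = φ n b := by
    intro n a b
    constructor
    · intro he
      exact le_antisymm ((hg n a b).mp he.le) ((hg n b a).mp he.ge)
    · intro he
      exact le_antisymm ((hg n a b).mpr he.le) ((hg n b a).mpr he.ge)
  refine ⟨g, ?_⟩
  intro x y l hxP hconv hlim
  choose m hm using hlim
  have hlim' : ∀ n, ∀ i, m n ≤ i → φ n (x i) = φ n (x (m n)) := by
    intro n i hi
    exact (hgeq n (x i) (x (m n))).mp ((hm n i hi).trans (hm n (m n) le_rfl).symm)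
  obtain ⟨hyP, hle⟩ := h x y (fun n => φ n (x (m n))) hxP hconv
    (fun n => ⟨m n, hlim' n⟩)
  refine ⟨hyP, fun n => ?_⟩
  calc g n y ≤ g n (x (m n)) := (hg n y (x (m n))).mpr (hle n)
    _ = l n := hm n (m n) le_rfl

/-- The scale on the projection, in the same universe as the given scale on `Q`. -/
theorem projection_scale_aux (Q : Set (Baire × Baire))
    (φ : ℕ → Baire × Baire → Ordinal.{u}) (hφQ : IsScale₂.{u} Q φ) :
    ∃ ψ : ℕ → Baire → Ordinal.{u}, IsScale.{u} {x : Baire | ∃ w, (x, w) ∈ Q} ψ := by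
  classical
  set Λ : Ordinal := Ordinal.omega0 ⊔ (⨆ p : ℕ × (Baire × Baire), (φ p.1 p.2 + 1)) with hΛdef
  have hω : Ordinal.omega0 ≤ Λ := le_sup_left
  have hb : ∀ n q, φ n q < Λ := by
    intro n q
    have h1 : φ n q < φ n q + 1 := by
      rw [Ordinal.add_one_eq_succ]; exact Order.lt_succ _
    have h2 : φ n q + 1 ≤ ⨆ p : ℕ × (Baire × Baire), (φ p.1 p.2 + 1) :=
      Ordinal.le_iSup (fun p : ℕ × (Baire × Baire) => φ p.1 p.2 + 1) (n, q)
    exact lt_of_lt_of_le (lt_of_lt_of_le h1 h2) le_sup_right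
  refine ⟨fun n x => sInf ((fun w => ocode φ Λ n (x, w)) '' {w | (x, w) ∈ Q}), ?_⟩
  intro x y l hxP hconv hlim
  have hchoice : ∀ i, ∃ w, (x i, w) ∈ Q ∧ ocode φ Λ i (x i, w) =
      sInf ((fun w' => ocode φ Λ i (x i, w')) '' {w' | (x i, w') ∈ Q}) := by
    intro i
    obtain ⟨wi, hwi⟩ := hxP i
    have hne : ((fun w' => ocode φ Λ i (x i, w')) '' {w' | (x i, w') ∈ Q}).Nonempty :=
      ⟨_, ⟨wi, hwi, rfl⟩⟩
    obtain ⟨w, hw, he⟩ := csInf_mem hne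
    exact ⟨w, hw, he⟩
  choose w hwQ hwmin using hchoice
  have hkey : ∀ n i, n ≤ i → ocode φ Λ n (x i, w i) =
      sInf ((fun w' => ocode φ Λ n (x i, w')) '' {w' | (x i, w') ∈ Q}) := by
    intro n i hni
    apply le_antisymm
    · refine le_csInf ⟨_, ⟨w i, hwQ i, rfl⟩⟩ ?_
      rintro o ⟨w', hw', rfl⟩
      by_contra hlt
      push_neg at hlt
      have h1 : ocode φ Λ i (x i, w') < ocode φ Λ i (x i, w i) :=
        ocode_strict hb hω hni hlt
      have h2 : ocode φ Λ i (x i, w i) ≤ ocode φ Λ i (x i, w') := by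
        rw [hwmin i]
        exact csInf_le (OrderBot.bddBelow _) ⟨w', hw', rfl⟩
      exact absurd h1 (not_lt.mpr h2)
    · exact csInf_le (OrderBot.bddBelow _) ⟨w i, hwQ i, rfl⟩
  choose m hm using hlim
  have hcode : ∀ n i, max (m n) n ≤ i → ocode φ Λ n (x i, w i) = l n := by
    intro n i hi
    rw [hkey n i (le_trans (le_max_right _ _) hi)]
    exact hm n i (le_trans (le_max_left _ _) hi)
  have hcomp : ∀ n i, max (m n) n ≤ i →
      φ n (x i, w i) = φ n (x (max (m n) n), w (max (m n) n)) ∧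
      w i n = w (max (m n) n) n := by
    intro n i hi
    exact ocode_inj hb hω ((hcode n i hi).trans (hcode n _ le_rfl).symm)
  set μ : ℕ → Ordinal := fun n => φ n (x (max (m n) n), w (max (m n) n)) with hμdef
  set v : Baire := fun n => w (max (m n) n) n with hvdef
  obtain ⟨hyQ, hφle⟩ := hφQ (fun i => (x i, w i)) (y, v) μ hwQ hconv
    (fun n => ⟨max (m n) n, fun i hi => (hcomp n i hi).2⟩)
    (fun n => ⟨max (m n) n, fun i hi => (hcomp n i hi).1⟩)
  refine ⟨⟨v, hyQ⟩, ?_⟩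
  intro n
  have h1 : sInf ((fun w' => ocode φ Λ n (y, w')) '' {w' | (y, w') ∈ Q}) ≤
      ocode φ Λ n (y, v) := csInf_le (OrderBot.bddBelow _) ⟨v, hyQ, rfl⟩
  set I := (Finset.range (n + 1)).sup (fun k => max (m k) k) with hIdef
  have hI : ∀ k, k ≤ n → max (m k) k ≤ I := fun k hk =>
    Finset.le_sup (f := fun k => max (m k) k) (Finset.mem_range.mpr (Nat.lt_succ_of_le hk))
  have h2 : ocode φ Λ n (y, v) ≤ ocode φ Λ n (x I, w I) := by
    apply ocode_le
    intro k hk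
    constructor
    · exact le_trans (hφle k) (le_of_eq (hcomp k I (hI k hk)).1.symm)
    · exact (hcomp k I (hI k hk)).2.symm
  have h3 : ocode φ Λ n (x I, w I) = l n := hcode n I (hI n le_rfl)
  exact le_trans h1 (le_of_le_of_eq h2 h3)

/-- If `Q ⊆ Baire × Baire` admits a scale, then its projection
`P = {x : ∃ w, (x,w) ∈ Q}` admits a scale. -/
theorem projection_admits_scale (Q : Set (Baire × Baire))
    (h : ∃ φ : ℕ → Baire × Baire → Ordinal, IsScale₂ Q φ) :
    ∃ ψ : ℕ → Baire → Ordinal, IsScale {x : Baire | ∃ w, (x, w) ∈ Q} ψ := by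
  obtain ⟨φ, hφQ⟩ := h
  obtain ⟨ψ, hψ⟩ := projection_scale_aux Q φ hφQ
  exact hψ.collapse
end

section
/- Let κ and μ be ordinals, let Q ⊆ Baire space × κ, and let ⟨φ_i : i ∈ ℕ⟩ be a scale on Q with φ_i(x,α) < μ for all i ∈ ℕ and all (x,α) ∈ Q. Let P = {x : there exists α < κ with (x,α) ∈ Q}, and for x ∈ P let α_x denote the least α < κ with (x,α) ∈ Q. Define norms on P by ψ_0(x) = 0 and ψ_{i+1}(x) = μ · α_x + φ_i(x, α_x) (ordinal arithmetic; this is the ordinal assigned to the pair ⟨α_x, φ_i(x,α_x)⟩ under the lexicographic order on pairs). Then ⟨ψ_i : i ∈ ℕ⟩ is a scale on P. (This is the 'min' step, Case 2 of the paper's Moschovakis scale construction, with the well-founded rank of the extra quantifier's domain represented by an ordinal.) -/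
/-- `φ` is a scale on `Q ⊆ Baire × Ordinal`, the ordinal coordinate carrying the
discrete topology (so a sequence of ordinals converges iff it is eventually constant). -/
def IsScaleOrd (Q : Set (Baire × Ordinal)) (φ : ℕ → Baire × Ordinal → Ordinal) : Prop :=
  ∀ (x : ℕ → Baire) (a : ℕ → Ordinal) (y : Baire) (α : Ordinal) (l : ℕ → Ordinal),
    (∀ i, (x i, a i) ∈ Q) →
    (∀ n, ∃ m, ∀ i, m ≤ i → x i n = y n) →
    (∃ m, ∀ i, m ≤ i → a i = α) →
    (∀ n, ∃ m, ∀ i, m ≤ i → φ n (x i, a i) = l n) →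
    (y, α) ∈ Q ∧ ∀ n, φ n (y, α) ≤ l n

private lemma lex_lt {μ α β a b : Ordinal} (ha : a < μ) (h : α < β) :
    μ * α + a < μ * β + b := by
  calc μ * α + a < μ * α + μ := add_lt_add_right ha _
    _ = μ * (α + 1) := (mul_add_one μ α).symm
    _ ≤ μ * β := mul_le_mul_right (Order.add_one_le_of_lt h) μ
    _ ≤ μ * β + b := le_self_add

private lemma lex_cancel {μ α β a b : Ordinal} (ha : a < μ) (hb : b < μ)
    (h : μ * α + a = μ * β + b) : α = β := by
  rcases lt_trichotomy α β with hlt | he | hgt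
  · exact absurd h (ne_of_lt (lex_lt ha hlt))
  · exact he
  · exact absurd h.symm (ne_of_lt (lex_lt hb hgt))

/-- The "min" step (Case 2) of the Moschovakis scale construction: given a scale `φ`
on `Q ⊆ Baire × κ` bounded by `μ`, let `P` be the projection of `Q` and, for `x ∈ P`,
let `A x` be the least `α < κ` with `(x, α) ∈ Q`.  Then the norms
`ψ 0 x = 0` and `ψ (i+1) x = μ · A x + φ i (x, A x)` (the ordinal of the pair
`⟨A x, φ i (x, A x)⟩` in the lexicographic order) form a scale on `P`. -/
theorem moschovakis_min_step
    (κ μ : Ordinal) (Q : Set (Baire × Ordinal))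
    (hQκ : ∀ p ∈ Q, p.2 < κ)
    (φ : ℕ → Baire × Ordinal → Ordinal)
    (hφ : IsScaleOrd Q φ)
    (hbound : ∀ i p, p ∈ Q → φ i p < μ)
    (P : Set Baire) (hP : ∀ x, x ∈ P ↔ ∃ α < κ, (x, α) ∈ Q)
    (A : Baire → Ordinal)
    (hA : ∀ x ∈ P, A x < κ ∧ (x, A x) ∈ Q ∧ ∀ β < κ, (x, β) ∈ Q → A x ≤ β)
    (ψ : ℕ → Baire → Ordinal)
    (hψ0 : ∀ x ∈ P, ψ 0 x = 0)
    (hψs : ∀ i, ∀ x ∈ P, ψ (i + 1) x = μ * A x + φ i (x, A x)) :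
    IsScale P ψ := by
  intro x y l hxP hconv hlim
  obtain ⟨m1, hm1⟩ := hlim 1
  set α := A (x m1) with hαdef
  have hAQ : ∀ i, (x i, A (x i)) ∈ Q := fun i => (hA _ (hxP i)).2.1
  have hψ1 : ∀ i, ψ 1 (x i) = μ * A (x i) + φ 0 (x i, A (x i)) :=
    fun i => hψs 0 _ (hxP i)
  have hAconst : ∀ i, m1 ≤ i → A (x i) = α := by
    intro i hi
    have h1 : μ * A (x i) + φ 0 (x i, A (x i)) = μ * α + φ 0 (x m1, α) := by
      rw [← hψ1 i, ← hψ1 m1, hm1 i hi, hm1 m1 le_rfl]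
    exact lex_cancel (hbound 0 _ (hAQ i)) (hbound 0 _ (hAQ m1)) h1
  -- the limit values for φ
  set lφ : ℕ → Ordinal := fun n => l (n + 1) - μ * α with hlφdef
  have hφconst : ∀ n, ∃ m, ∀ i, m ≤ i → φ n (x i, A (x i)) = lφ n := by
    intro n
    obtain ⟨mn, hmn⟩ := hlim (n + 1)
    refine ⟨max m1 mn, fun i hi => ?_⟩
    have hi1 : m1 ≤ i := le_trans (le_max_left _ _) hi
    have hi2 : mn ≤ i := le_trans (le_max_right _ _) hi
    have : μ * α + φ n (x i, A (x i)) = l (n + 1) := by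
      rw [← hAconst i hi1, ← hψs n _ (hxP i)]
      exact hmn i hi2
    simp only [hlφdef]
    rw [← this, Ordinal.add_sub_cancel]
  have hl1 : ∀ n, l (n + 1) = μ * α + lφ n := by
    intro n
    obtain ⟨m, hm⟩ := hφconst n
    obtain ⟨m', hm'⟩ := hlim (n + 1)
    have hi1 : m1 ≤ max m1 (max m m') := le_max_left _ _
    have hi2 : m ≤ max m1 (max m m') := le_trans (le_max_left _ _) (le_max_right _ _)
    have hi3 : m' ≤ max m1 (max m m') := le_trans (le_max_right _ _) (le_max_right _ _)
    rw [← hm' _ hi3, hψs n _ (hxP _), hm _ hi2, hAconst _ hi1]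
  have key := hφ x (fun i => A (x i)) y α lφ hAQ hconv ⟨m1, hAconst⟩ hφconst
  obtain ⟨hyQ, hyle⟩ := key
  have hακ : α < κ := (hA _ (hxP m1)).1
  have hyP : y ∈ P := (hP y).2 ⟨α, hακ, hyQ⟩
  refine ⟨hyP, fun n => ?_⟩
  cases n with
  | zero => rw [hψ0 y hyP]; exact zero_le
  | succ n =>
    rw [hψs n y hyP, hl1 n]
    have hAy : A y ≤ α := (hA y hyP).2.2 α hακ hyQ
    rcases lt_or_eq_of_le hAy with hlt | heq
    · exact le_of_lt (lex_lt (hbound n _ (hA y hyP).2.1) hlt)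
    · rw [heq]; exact add_le_add_right (hyle n) _
end

section
/- Let X be a set, R ⊆ X × Baire space, k ∈ ℕ, and let φ_0, …, φ_k be norms on R. Let D = {p ∈ X : (p,y) ∈ R for every y in Baire space}, fix a finite sequence t of natural numbers, let G(p,p′) for p, p′ ∈ D be the comparison games described in the context, and define p ≤* p′ iff player II has a winning strategy in G(p,p′). Assume that every game G(p,p′) with p, p′ ∈ D is determined, i.e., one of the two players has a winning strategy. Then ≤* is a prewellordering of D: it is reflexive and transitive on D; for all p, p′ ∈ D, p ≤* p′ or p′ ≤* p; and the strict relation <* (where p <* p′ iff p ≤* p′ and not p′ ≤* p) is well-founded on D. -/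
/-- Concatenate a finite sequence `t` with an infinite sequence `z`, giving `t⌢z`. -/
def extSeq (t : List ℕ) (z : Baire) : Baire :=
  fun n => if h : n < t.length then t.get ⟨n, h⟩ else z (n - t.length)

/-- Lexicographic `≤` on tuples of ordinals. -/
def LexLE {n : ℕ} (f g : Fin n → Ordinal) : Prop :=
  f = g ∨ ∃ j, (∀ i, i < j → f i = g i) ∧ f j < g j

/-- Player II wins the run of the comparison game `G(p,p′)` in which player I has
produced `z` and player II has produced `z′`: with `y = t⌢z` and `y′ = t⌢z′`,
`⟨φ 0 (p,y), …, φ k (p,y)⟩ ≤ ⟨φ 0 (p′,y′), …, φ k (p′,y′)⟩` lexicographically. -/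
def IIWinsRun {X : Type*} {k : ℕ} (φ : Fin (k + 1) → X × Baire → Ordinal)
    (t : List ℕ) (p p' : X) (z z' : Baire) : Prop :=
  LexLE (fun j => φ j (p, extSeq t z)) (fun j => φ j (p', extSeq t z'))

/-- Player II's response to player I's moves `z` when following the strategy `σ`
(a function of the nonempty finite sequences `⟨z 0, …, z n⟩` of player I's moves,
since player I's move `z n` is made before player II's move `z′ n`). -/
def IIPlay (σ : List ℕ → ℕ) (z : Baire) : Baire :=
  fun n => σ ((List.range (n + 1)).map z)

/-- Player I's response to player II's moves `z′` when following the strategy `τ`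
(a function of the finite sequences `⟨z′ 0, …, z′ (n−1)⟩` of player II's previous
moves, including the empty sequence). -/
def IPlay (τ : List ℕ → ℕ) (z' : Baire) : Baire :=
  fun n => τ ((List.range n).map z')

/-- Player II has a winning strategy in the comparison game `G(p,p′)`: `p ≤* p′`. -/
def LeStar {X : Type*} {k : ℕ} (φ : Fin (k + 1) → X × Baire → Ordinal)
    (t : List ℕ) (p p' : X) : Prop :=
  ∃ σ : List ℕ → ℕ, ∀ z : Baire, IIWinsRun φ t p p' z (IIPlay σ z)

/-- Player I has a winning strategy in the comparison game `G(p,p′)`. -/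
def IWins {X : Type*} {k : ℕ} (φ : Fin (k + 1) → X × Baire → Ordinal)
    (t : List ℕ) (p p' : X) : Prop :=
  ∃ τ : List ℕ → ℕ, ∀ z' : Baire, ¬ IIWinsRun φ t p p' (IPlay τ z') z'


lemma lexLE_iff {n : ℕ} (f g : Fin n → Ordinal) : LexLE f g ↔ toLex f ≤ toLex g := by
  rw [le_iff_lt_or_eq, LexLE]
  constructor
  · rintro (rfl | ⟨j, h1, h2⟩)
    · exact Or.inr rfl
    · exact Or.inl ⟨j, h1, h2⟩
  · rintro (⟨j, h1, h2⟩ | h)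
    · exact Or.inr ⟨j, h1, h2⟩
    · exact Or.inl (toLex.injective h)

lemma lexLE_total {n : ℕ} (f g : Fin n → Ordinal) : LexLE f g ∨ LexLE g f := by
  by_cases h : f = g
  · exact Or.inl (Or.inl h)
  · have hne : ∃ i, f i ≠ g i := by
      by_contra hc; push_neg at hc; exact h (funext hc)
    obtain ⟨i0, hi0⟩ := hne
    obtain ⟨j, hj, hmin⟩ :=
      (IsWellFounded.wf : WellFounded ((· < ·) : Fin n → Fin n → Prop)).has_min
        {i | f i ≠ g i} ⟨i0, hi0⟩
    have heq : ∀ i, i < j → f i = g i := fun i hij =>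
      not_not.mp fun hne' => hmin i hne' hij
    rcases lt_trichotomy (f j) (g j) with hlt | heqj | hgt
    · exact Or.inl (Or.inr ⟨j, heq, hlt⟩)
    · exact absurd heqj hj
    · exact Or.inr (Or.inr ⟨j, fun i hij => (heq i hij).symm, hgt⟩)

lemma lt_of_not_lexLE {n : ℕ} (f g : Fin n → Ordinal) (h : ¬ LexLE g f) :
    toLex f < toLex g := by
  rcases lexLE_total f g with h1 | h1
  · have hne : f ≠ g := fun e => h (Or.inl e.symm)
    exact lt_of_le_of_ne ((lexLE_iff f g).mp h1) fun e => hne (toLex.injective e)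
  · exact absurd h1 h

lemma no_lex_descending {n : ℕ} (g : ℕ → Lex (Fin n → Ordinal))
    (h : ∀ m, g (m + 1) < g m) : False := by
  have wf : WellFounded ((· < ·) : Lex (Fin n → Ordinal) → _ → Prop) := IsWellFounded.wf
  obtain ⟨p, hp, hmin⟩ := wf.has_min (Set.range g) ⟨g 0, 0, rfl⟩
  obtain ⟨m, rfl⟩ := hp
  exact hmin (g (m + 1)) ⟨m + 1, rfl⟩ (h m)

/-- The diagonal play: `diag τ n` is the sequence of player I's moves in the `n`-th
game when player I follows `τ n` in game `n` against player I's moves in game `n+1`. -/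
def diag (τ : ℕ → List ℕ → ℕ) : ℕ → ℕ → ℕ
  | n, m => τ n ((List.range m).attach.map fun i => diag τ (n + 1) i.1)
termination_by n m => m
decreasing_by exact List.mem_range.mp i.2

lemma diag_eq (τ : ℕ → List ℕ → ℕ) (n : ℕ) : diag τ n = IPlay (τ n) (diag τ (n + 1)) := by
  funext m
  rw [diag, IPlay]
  congr 1
  rw [List.attach_map_val]

/-- Assuming each comparison game `G(p,p′)` with `p, p′ ∈ D` is determined, the
relation `≤*` is a prewellordering of `D = {p : (p,y) ∈ R for every y}`: it is
reflexive, transitive, and total on `D`, and the strict part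
`p <* p′ ↔ p ≤* p′ ∧ ¬ p′ ≤* p` is well-founded on `D` (every nonempty subset of `D`
has a `<*`-minimal element). -/
theorem leStar_prewellordering {X : Type*} (R : Set (X × Baire)) (k : ℕ)
    (φ : Fin (k + 1) → X × Baire → Ordinal) (t : List ℕ)
    (D : Set X) (hD : ∀ p, p ∈ D ↔ ∀ y : Baire, (p, y) ∈ R)
    (hdet : ∀ p ∈ D, ∀ p' ∈ D, LeStar φ t p p' ∨ IWins φ t p p') :
    (∀ p ∈ D, LeStar φ t p p) ∧
    (∀ p ∈ D, ∀ q ∈ D, ∀ r ∈ D,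
      LeStar φ t p q → LeStar φ t q r → LeStar φ t p r) ∧
    (∀ p ∈ D, ∀ q ∈ D, LeStar φ t p q ∨ LeStar φ t q p) ∧
    (∀ S : Set X, S ⊆ D → S.Nonempty →
      ∃ p ∈ S, ∀ q ∈ S, ¬ (LeStar φ t q p ∧ ¬ LeStar φ t p q)) := by

  have key : ∀ p p', IWins φ t p p' → LeStar φ t p' p := by
    rintro p p' ⟨τ, hτ⟩
    refine ⟨fun s => τ s.dropLast, fun z => ?_⟩
    have hz : IIPlay (fun s => τ s.dropLast) z = IPlay τ z := by
      funext m
      simp only [IIPlay, IPlay]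
      congr 1
      simp [List.range_succ]
    rw [hz]
    have h1 := hτ z
    unfold IIWinsRun at h1 ⊢
    rcases lexLE_total (fun j => φ j (p', extSeq t z))
      (fun j => φ j (p, extSeq t (IPlay τ z))) with h2 | h2
    · exact h2
    · exact absurd h2 h1
  have hrefl : ∀ p, LeStar φ t p p := by
    intro p
    refine ⟨fun s => s.getLastD 0, fun z => ?_⟩
    have hz : IIPlay (fun s => s.getLastD 0) z = z := by
      funext m
      simp [IIPlay, List.range_succ]
    rw [hz]
    exact Or.inl rfl
  have htrans : ∀ p q r, LeStar φ t p q → LeStar φ t q r → LeStar φ t p r := by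
    rintro p q r ⟨σ1, h1⟩ ⟨σ2, h2⟩
    refine ⟨fun s => σ2 ((List.range s.length).map fun i => σ1 (s.take (i + 1))), fun z => ?_⟩
    have hz : IIPlay (fun s => σ2 ((List.range s.length).map fun i => σ1 (s.take (i + 1)))) z
        = IIPlay σ2 (IIPlay σ1 z) := by
      funext m
      simp only [IIPlay, List.length_map, List.length_range]
      congr 1
      refine List.map_congr_left fun i hi => ?_
      congr 1
      rw [← List.map_take, List.take_range, Nat.min_eq_left (List.mem_range.mp hi)]
    rw [hz]
    have ha := h1 z
    have hb := h2 (IIPlay σ1 z)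
    unfold IIWinsRun at ha hb ⊢
    rw [lexLE_iff] at ha hb ⊢
    exact ha.trans hb
  refine ⟨fun p _ => hrefl p, fun p _ q _ r _ => htrans p q r, fun p hp q hq => ?_, ?_⟩
  · rcases hdet p hp q hq with h | h
    · exact Or.inl h
    · exact Or.inr (key _ _ h)
  · rintro S hSD ⟨p0, hp0⟩
    by_contra hcon
    push_neg at hcon
    have step : ∀ x : {x // x ∈ S}, ∃ y : {x // x ∈ S}, IWins φ t x.1 y.1 := by
      rintro ⟨x, hx⟩
      obtain ⟨q, hq, _, hnq⟩ := hcon x hx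
      rcases hdet x (hSD hx) q (hSD hq) with h | h
      · exact absurd h hnq
      · exact ⟨⟨q, hq⟩, h⟩
    choose next hnext using step
    set f : ℕ → {x // x ∈ S} := fun n => next^[n] ⟨p0, hp0⟩ with hf
    have hstep : ∀ n, IWins φ t (f n).1 (f (n + 1)).1 := by
      intro n
      have hfn : f (n + 1) = next (f n) := by
        rw [hf]; simp [Function.iterate_succ_apply']
      rw [hfn]
      exact hnext (f n)
    choose τ hτ using hstep
    have hdesc : ∀ n, toLex (fun j => φ j ((f (n + 1)).1, extSeq t (diag τ (n + 1)))) <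
        toLex (fun j => φ j ((f n).1, extSeq t (diag τ n))) := by
      intro n
      have h1 := hτ n (diag τ (n + 1))
      rw [← diag_eq τ n] at h1
      unfold IIWinsRun at h1
      exact lt_of_not_lexLE _ _ h1
    exact no_lex_descending
      (fun n => toLex fun j => φ j ((f n).1, extSeq t (diag τ n))) hdesc
end

section
/- For an ordinal κ, if Q ⊆ Baire space × κ admits a scale, then the set P = {x : there exists α < κ with (x,α) ∈ Q} admits a scale. -/
namespace ScaleAux

universe v w u₁ u₂

/-- Lexicographic-style triple code of ordinals below `Θ` (first coordinate unbounded). -/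
noncomputable def code (Θ a b c : Ordinal.{v}) : Ordinal.{v} := Θ * (Θ * a + b) + c

lemma pair_lt {Θ u v c c' : Ordinal.{v}} (huv : u < v) (hc : c < Θ) :
    Θ * u + c < Θ * v + c' := by
  have h1 : Θ * u + c < Θ * u + Θ := add_lt_add_right hc _
  have h2 : Θ * u + Θ = Θ * (u + 1) := by
    rw [Ordinal.add_one_eq_succ, Ordinal.mul_succ]
  have h3 : Θ * (u + 1) ≤ Θ * v := by
    apply mul_le_mul_right
    rw [Ordinal.add_one_eq_succ, Order.succ_le_iff]; exact huv
  exact lt_of_lt_of_le (h2 ▸ h1) (h3.trans le_self_add)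

lemma code_lt {Θ a a' b b' c c' : Ordinal.{v}} (hb : b < Θ) (hc : c < Θ)
    (h : a < a' ∨ (a = a' ∧ (b < b' ∨ (b = b' ∧ c < c')))) :
    code Θ a b c < code Θ a' b' c' := by
  unfold code
  rcases h with h | ⟨rfl, h | ⟨rfl, h⟩⟩
  · exact pair_lt (pair_lt h hb) hc
  · exact pair_lt (add_lt_add_right h _) hc
  · exact add_lt_add_right h _

lemma code_le {Θ a a' b b' c c' : Ordinal.{v}} (hb : b < Θ) (hc : c < Θ)
    (h : a < a' ∨ (a = a' ∧ (b < b' ∨ (b = b' ∧ c ≤ c')))) :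
    code Θ a b c ≤ code Θ a' b' c' := by
  rcases h with h | ⟨rfl, h | ⟨rfl, h⟩⟩
  · exact (code_lt hb hc (Or.inl h)).le
  · exact (code_lt hb hc (Or.inr ⟨rfl, Or.inl h⟩)).le
  · exact add_le_add_right h _

lemma code_inj {Θ a a' b b' c c' : Ordinal.{v}} (hb : b < Θ) (hc : c < Θ)
    (hb' : b' < Θ) (hc' : c' < Θ) (h : code Θ a b c = code Θ a' b' c') :
    a = a' ∧ b = b' ∧ c = c' := by
  rcases lt_trichotomy a a' with hh | rfl | hh
  · exact absurd h (code_lt hb hc (Or.inl hh)).ne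
  · rcases lt_trichotomy b b' with hh | rfl | hh
    · exact absurd h (code_lt hb hc (Or.inr ⟨rfl, Or.inl hh⟩)).ne
    · rcases lt_trichotomy c c' with hh | rfl | hh
      · exact absurd h (code_lt hb hc (Or.inr ⟨rfl, Or.inr ⟨rfl, hh⟩⟩)).ne
      · exact ⟨rfl, rfl, rfl⟩
      · exact absurd h.symm (code_lt hb' hc' (Or.inr ⟨rfl, Or.inr ⟨rfl, hh⟩⟩)).ne
    · exact absurd h.symm (code_lt hb' hc' (Or.inr ⟨rfl, Or.inl hh⟩)).ne
  · exact absurd h.symm (code_lt hb' hc' (Or.inl hh)).ne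

/-- A scale with values in `Ordinal.{v}` can be collapsed to a scale with values
in `Ordinal.{w}`, since only a `Baire`-indexed family of values occurs. -/
lemma collapse {P : Set Baire} (f : ℕ → Baire → Ordinal.{v}) (hf : IsScale P f) :
    ∃ ψ : ℕ → Baire → Ordinal.{w}, IsScale P ψ := by
  classical
  set S : Set Ordinal.{v} := Set.range (fun p : ℕ × Baire => f p.1 p.2) with hS
  let e := equivShrink.{w} ↥S
  let rel : Shrink.{w} ↥S → Shrink.{w} ↥S → Prop := ⇑e.symm ⁻¹'o Subrel (· < ·) (· ∈ S)
  haveI hwo : IsWellOrder (Shrink.{w} ↥S) rel :=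
    RelIso.IsWellOrder.preimage (Subrel (· < ·) (· ∈ S)) e.symm
  have hmem : ∀ n x, f n x ∈ S := fun n x => ⟨(n, x), rfl⟩
  let E : ℕ → Baire → Ordinal.{w} := fun n x =>
    Ordinal.typein rel (e ⟨f n x, hmem n x⟩)
  have hElt : ∀ {n x m z}, E n x < E m z ↔ f n x < f m z := by
    intro n x m z
    rw [show E n x = Ordinal.typein rel (e ⟨f n x, hmem n x⟩) from rfl,
      show E m z = Ordinal.typein rel (e ⟨f m z, hmem m z⟩) from rfl,
      Ordinal.typein_lt_typein]
    show Subrel (· < ·) (· ∈ S) (e.symm (e _)) (e.symm (e _)) ↔ _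
    rw [e.symm_apply_apply, e.symm_apply_apply]
    exact Iff.rfl
  have hEeq : ∀ {n x m z}, E n x = E m z ↔ f n x = f m z := by
    intro n x m z
    constructor
    · intro h
      rcases lt_trichotomy (f n x) (f m z) with hh | hh | hh
      · exact absurd h (hElt.mpr hh).ne
      · exact hh
      · exact absurd h.symm (hElt.mpr hh).ne
    · intro h
      rcases lt_trichotomy (E n x) (E m z) with hh | hh | hh
      · exact absurd h (hElt.mp hh).ne
      · exact hh
      · exact absurd h.symm (hElt.mp hh).ne
  have hEle : ∀ {n x m z}, E n x ≤ E m z ↔ f n x ≤ f m z := by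
    intro n x m z
    rw [le_iff_lt_or_eq, le_iff_lt_or_eq, hElt, hEeq]
  refine ⟨E, ?_⟩
  intro x y l hxP hconv hlim
  have hlim' : ∀ n, ∃ m, ∀ i, m ≤ i → f n (x i) = f n (x m) := by
    intro n
    obtain ⟨m, hm⟩ := hlim n
    exact ⟨m, fun i hi => hEeq.mp ((hm i hi).trans (hm m le_rfl).symm)⟩
  choose M hM using hlim'
  obtain ⟨hyP, hyle⟩ := hf x y (fun n => f n (x (M n))) hxP hconv
    (fun n => ⟨M n, hM n⟩)
  refine ⟨hyP, fun n => ?_⟩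
  obtain ⟨m, hm⟩ := hlim n
  have h1 : E n y ≤ E n (x (M n)) := hEle.mpr (hyle n)
  have h2 : E n (x (M n)) = l n := by
    have h3 := hm (max m (M n)) (le_max_left _ _)
    rwa [hEeq.mpr (hM n (max m (M n)) (le_max_right _ _))] at h3
  exact h1.trans_eq h2

section Main

variable (κ : Ordinal.{u₁}) (Q : Set (Baire × Ordinal.{u₁}))
  (φ : ℕ → Baire × Ordinal.{u₁} → Ordinal.{u₂})

/-- The bound. -/
noncomputable def Theta : Ordinal.{max u₁ u₂} :=
  max (Ordinal.lift.{u₂} κ)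
    ((⨆ n : ℕ, ⨆ z : Baire, ⨆ β : Set.Iio κ, Ordinal.lift.{u₁} (φ n (z, β.1))) + 1)

/-- The minimal value of the zeroth norm among witnesses. -/
noncomputable def m0 (x : Baire) : Ordinal.{u₂} :=
  sInf ((fun α => φ 0 (x, α)) '' {α | (x, α) ∈ Q})

/-- The least witness realizing the minimal zeroth norm. -/
noncomputable def al (x : Baire) : Ordinal.{u₁} :=
  sInf {α | (x, α) ∈ Q ∧ φ 0 (x, α) = m0 Q φ x}

open Classical in
/-- The scale on the projection, before collapsing universes. -/
noncomputable def psi (n : ℕ) (x : Baire) : Ordinal.{max u₁ u₂} :=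
  if _ : ∃ α, (x, α) ∈ Q then
    code (Theta κ φ) (Ordinal.lift.{u₁} (φ 0 (x, al Q φ x)))
      (Ordinal.lift.{u₂} (al Q φ x)) (Ordinal.lift.{u₁} (φ n (x, al Q φ x)))
  else 0

lemma lift_lt_Theta (hQ : ∀ p ∈ Q, p.2 < κ) (n : ℕ) (p : Baire × Ordinal.{u₁})
    (hp : p ∈ Q) : Ordinal.lift.{u₁} (φ n p) < Theta κ φ := by
  haveI : Small.{max u₁ u₂} ↥(Set.Iio κ) := small_lift _
  have h2 : Ordinal.lift.{u₁} (φ n p) ≤ ⨆ n : ℕ, ⨆ z : Baire, ⨆ β : Set.Iio κ,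
      Ordinal.lift.{u₁} (φ n (z, β.1)) := by
    have h0 : Ordinal.lift.{u₁} (φ n (p.1, ((⟨p.2, hQ p hp⟩ : Set.Iio κ) : Set.Iio κ).1)) ≤
        ⨆ β : Set.Iio κ, Ordinal.lift.{u₁} (φ n (p.1, β.1)) := Ordinal.le_iSup _ _
    refine le_trans ?_ (le_trans (Ordinal.le_iSup
      (fun z => ⨆ β : Set.Iio κ, Ordinal.lift.{u₁} (φ n (z, β.1))) p.1)
      (Ordinal.le_iSup (fun n => ⨆ z : Baire, ⨆ β : Set.Iio κ,
        Ordinal.lift.{u₁} (φ n (z, β.1))) n))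
    simpa using h0
  exact lt_of_le_of_lt h2 (lt_of_lt_of_le (lt_add_one _) (le_max_right _ _))

lemma main (hQ : ∀ p ∈ Q, p.2 < κ) (hφ : IsScaleOrd Q φ) :
    ∃ ψ : ℕ → Baire → Ordinal.{w}, IsScale {x : Baire | ∃ α < κ, (x, α) ∈ Q} ψ := by
  classical
  apply collapse (psi κ Q φ)
  have hΘκ : Ordinal.lift.{u₂} κ ≤ Theta κ φ := le_max_left _ _
  have hal : ∀ x : Baire, (∃ α, (x, α) ∈ Q) →
      (x, al Q φ x) ∈ Q ∧ φ 0 (x, al Q φ x) = m0 Q φ x := by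
    rintro x ⟨α, hα⟩
    have h1 : ((fun α => φ 0 (x, α)) '' {α | (x, α) ∈ Q}).Nonempty := ⟨_, ⟨α, hα, rfl⟩⟩
    obtain ⟨β, hβQ, hβ⟩ := csInf_mem h1
    exact csInf_mem (⟨β, hβQ, hβ⟩ : {α | (x, α) ∈ Q ∧ φ 0 (x, α) = m0 Q φ x}.Nonempty)
  have hm0le : ∀ (x : Baire) α, (x, α) ∈ Q → m0 Q φ x ≤ φ 0 (x, α) :=
    fun x α hα => csInf_le (OrderBot.bddBelow _) ⟨α, hα, rfl⟩
  have halle : ∀ (x : Baire) α, (x, α) ∈ Q → φ 0 (x, α) = m0 Q φ x → al Q φ x ≤ α :=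
    fun x α hα he => csInf_le (OrderBot.bddBelow _) ⟨hα, he⟩
  intro x y l hxP hconv hlim
  have hxQ : ∀ i, ∃ α, (x i, α) ∈ Q := fun i => (hxP i).imp fun α hα => hα.2
  have hxal : ∀ i, (x i, al Q φ (x i)) ∈ Q := fun i => (hal _ (hxQ i)).1
  replace hlim : ∀ n, ∃ m, ∀ i, m ≤ i →
      code (Theta κ φ) (Ordinal.lift.{u₁} (φ 0 (x i, al Q φ (x i))))
        (Ordinal.lift.{u₂} (al Q φ (x i)))
        (Ordinal.lift.{u₁} (φ n (x i, al Q φ (x i)))) = l n := by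
    intro n
    obtain ⟨m, hm⟩ := hlim n
    refine ⟨m, fun i hi => ?_⟩
    have h4 := hm i hi
    rwa [psi, dif_pos (hxQ i)] at h4
  have hbB : ∀ i, Ordinal.lift.{u₂} (al Q φ (x i)) < Theta κ φ :=
    fun i => lt_of_lt_of_le (Ordinal.lift_lt.mpr (hQ _ (hxal i))) hΘκ
  have hbφ : ∀ n i, Ordinal.lift.{u₁} (φ n (x i, al Q φ (x i))) < Theta κ φ :=
    fun n i => lift_lt_Theta κ Q φ hQ n _ (hxal i)
  obtain ⟨M0, hM0⟩ := hlim 0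
  have hcomp : ∀ i, M0 ≤ i →
      φ 0 (x i, al Q φ (x i)) = φ 0 (x M0, al Q φ (x M0)) ∧
        al Q φ (x i) = al Q φ (x M0) := by
    intro i hi
    have hcd := (hM0 i hi).trans (hM0 M0 le_rfl).symm
    obtain ⟨h1, h2, _⟩ := code_inj (hbB i) (hbφ 0 i) (hbB M0) (hbφ 0 M0) hcd
    exact ⟨Ordinal.lift_inj.mp h1, Ordinal.lift_inj.mp h2⟩
  set A := φ 0 (x M0, al Q φ (x M0)) with hAdef
  set B := al Q φ (x M0) with hBdef
  choose Mn hMn using hlim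
  set C : ℕ → Ordinal.{u₂} :=
    fun n => φ n (x (max M0 (Mn n)), al Q φ (x (max M0 (Mn n)))) with hCdef
  have hCc : ∀ n i, max M0 (Mn n) ≤ i → φ n (x i, al Q φ (x i)) = C n := by
    intro n i hi
    have hcd := (hMn n i (le_trans (le_max_right _ _) hi)).trans
      (hMn n (max M0 (Mn n)) (le_max_right _ _)).symm
    exact Ordinal.lift_inj.mp
      (code_inj (hbB i) (hbφ n i) (hbB _) (hbφ n _) hcd).2.2
  obtain ⟨hyQ, hyle⟩ := hφ x (fun i => al Q φ (x i)) y B C hxal hconv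
    ⟨M0, fun i hi => (hcomp i hi).2⟩
    (fun n => ⟨max M0 (Mn n), hCc n⟩)
  have hyP : ∃ α, (y, α) ∈ Q := ⟨B, hyQ⟩
  have hyal : (y, al Q φ y) ∈ Q := (hal y hyP).1
  constructor
  · exact ⟨B, hQ _ hyQ, hyQ⟩
  intro n
  rw [psi, dif_pos hyP]
  have hln : l n = code (Theta κ φ) (Ordinal.lift.{u₁} A) (Ordinal.lift.{u₂} B)
      (Ordinal.lift.{u₁} (C n)) := by
    have hi : M0 ≤ max M0 (Mn n) := le_max_left _ _
    rw [← hMn n (max M0 (Mn n)) (le_max_right _ _), (hcomp _ hi).1]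
    simp only [hCdef]
    rw [(hcomp _ hi).2]
  rw [hln]
  have hC0 : C 0 = A := by
    rw [← hCc 0 (max M0 (Mn 0)) le_rfl]
    exact (hcomp _ (le_max_left _ _)).1
  have hm0y : φ 0 (y, al Q φ y) = m0 Q φ y := (hal y hyP).2
  have h1 : m0 Q φ y ≤ A := by
    calc m0 Q φ y ≤ φ 0 (y, B) := hm0le y B hyQ
    _ ≤ C 0 := hyle 0
    _ = A := hC0
  have hbal : Ordinal.lift.{u₂} (al Q φ y) < Theta κ φ :=
    lt_of_lt_of_le (Ordinal.lift_lt.mpr (hQ _ hyal)) hΘκ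
  have hbφy : Ordinal.lift.{u₁} (φ n (y, al Q φ y)) < Theta κ φ :=
    lift_lt_Theta κ Q φ hQ n _ hyal
  apply code_le hbal hbφy
  rw [hm0y]
  rcases lt_or_eq_of_le h1 with hh | hh
  · exact Or.inl (Ordinal.lift_lt.mpr hh)
  · refine Or.inr ⟨congrArg _ hh, ?_⟩
    have hφ0B : φ 0 (y, B) = m0 Q φ y :=
      le_antisymm (((hyle 0).trans hC0.le).trans hh.ge) (hm0le y B hyQ)
    have h2 : al Q φ y ≤ B := halle y B hyQ hφ0B
    rcases lt_or_eq_of_le h2 with hh2 | hh2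
    · exact Or.inl (Ordinal.lift_lt.mpr hh2)
    · exact Or.inr ⟨congrArg _ hh2, Ordinal.lift_le.mpr (hh2 ▸ hyle n)⟩

end Main

end ScaleAux

/-- If `Q ⊆ Baire × κ` admits a scale, then `P = {x : ∃ α < κ, (x,α) ∈ Q}`
admits a scale. -/
theorem exists_scale_of_ordinal_projection (κ : Ordinal) (Q : Set (Baire × Ordinal))
    (hQ : ∀ p ∈ Q, p.2 < κ)
    (h : ∃ φ : ℕ → Baire × Ordinal → Ordinal, IsScaleOrd Q φ) :
    ∃ ψ : ℕ → Baire → Ordinal, IsScale {x : Baire | ∃ α < κ, (x, α) ∈ Q} ψ := by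
  obtain ⟨φ, hφ⟩ := h
  exact ScaleAux.main κ Q φ hQ hφ
end
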